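/- Let G be an abelian lattice-ordered group with weak order unit, and let N be a maximal proper c-subgroup. Then for every complementary pair e, f ∈ G⁺ (e ∧ f = 0 and e ∨ f a weak order unit), exactly one of e, f belongs to N. -/

import Mathlib

variable {G : Type*} [Lattice G] [AddCommGroup G]
  [CovariantClass G G (· + ·) (· ≤ ·)]

/-- The polar of a subset `S` of a lattice-ordered group. -/
def polar (S : Set G) : Set G := {h : G | ∀ g ∈ S, |h| ⊓ |g| = 0}

/-- A convex ℓ-subgroup: a subgroup closed under the lattice operations
which is convex. -/
def IsConvexLSubgroup (H : Set G) : Prop :=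
  (0 : G) ∈ H ∧ (∀ a ∈ H, ∀ b ∈ H, a + b ∈ H) ∧ (∀ a ∈ H, -a ∈ H) ∧
  (∀ a ∈ H, ∀ b ∈ H, a ⊔ b ∈ H) ∧ (∀ a ∈ H, ∀ b ∈ H, a ⊓ b ∈ H) ∧
  (∀ a b : G, 0 ≤ a → a ≤ b → b ∈ H → a ∈ H)

/-- A weak order unit: a positive element with trivial polar. -/
def IsWeakUnit (w : G) : Prop := 0 ≤ w ∧ ∀ x : G, |x| ⊓ w = 0 → x = 0

/-- A d-subgroup: a convex ℓ-subgroup closed under double polars. -/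
def IsDSubgroup (H : Set G) : Prop :=
  IsConvexLSubgroup H ∧ ∀ h ∈ H, polar (polar {h}) ⊆ H

/-- A maximal d-subgroup: a convex ℓ-subgroup maximal with respect to
not containing any weak order unit. -/
def IsMaxD (M : Set G) : Prop :=
  IsConvexLSubgroup M ∧ (∀ w ∈ M, ¬ IsWeakUnit w) ∧
  ∀ H : Set G, IsConvexLSubgroup H → (∀ w ∈ H, ¬ IsWeakUnit w) → M ⊆ H → H = M

/-- A complemented element. -/
def IsComplementedElt (g : G) : Prop :=
  0 ≤ g ∧ ∃ f : G, 0 ≤ f ∧ g ⊓ f = 0 ∧ IsWeakUnit (g ⊔ f)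

/-- A c-subgroup: a convex ℓ-subgroup generated by its complemented elements,
equivalently every element is dominated in absolute value by a complemented
element of the subgroup. -/
def IsCSubgroup (H : Set G) : Prop :=
  IsConvexLSubgroup H ∧ ∀ h ∈ H, ∃ e ∈ H, IsComplementedElt e ∧ |h| ≤ e

/-- A maximal proper c-subgroup: a c-subgroup maximal with respect to
not containing any weak order unit. -/
def IsMaxC (N : Set G) : Prop :=
  IsCSubgroup N ∧ (∀ w ∈ N, ¬ IsWeakUnit w) ∧
  ∀ H : Set G, IsCSubgroup H → (∀ w ∈ H, ¬ IsWeakUnit w) → N ⊆ H → H = N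

/-- `Mc M`: the convex ℓ-subgroup generated by the complemented elements of `M`. -/
def Mc (M : Set G) : Set G :=
  ⋂₀ {H : Set G | IsConvexLSubgroup H ∧ {e ∈ M | IsComplementedElt e} ⊆ H}

lemma aux_inf_add_le (a b c : G) (ha : 0 ≤ a) (hb : 0 ≤ b) (hc : 0 ≤ c) :
    (a + b) ⊓ c ≤ a ⊓ c + b ⊓ c := by
  have h : a ⊓ c + b ⊓ c = ((a + b) ⊓ (a + c)) ⊓ ((c + b) ⊓ (c + c)) := by
    rw [inf_add, add_inf, add_inf]
  rw [h]
  exact le_inf (le_inf inf_le_left (inf_le_right.trans (le_add_of_nonneg_left ha)))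
    (le_inf (inf_le_right.trans (le_add_of_nonneg_right hb))
      (inf_le_right.trans (le_add_of_nonneg_right hc)))

lemma aux_smul_inf (a b : G) (ha : 0 ≤ a) (hb : 0 ≤ b) (hab : a ⊓ b = 0) (k : ℕ) :
    (k • a) ⊓ b = 0 := by
  induction k with
  | zero => simpa [zero_nsmul] using inf_eq_left.mpr hb
  | succ m ih =>
    refine le_antisymm ?_ (le_inf (nsmul_nonneg ha _) hb)
    calc ((m + 1) • a) ⊓ b = (m • a + a) ⊓ b := by rw [succ_nsmul]
      _ ≤ (m • a) ⊓ b + a ⊓ b := aux_inf_add_le _ _ _ (nsmul_nonneg ha m) ha hb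
      _ = 0 := by rw [ih, hab, add_zero]

lemma aux_disj_sup (x p q : G) (hx : 0 ≤ x) (hp : 0 ≤ p) (hq : 0 ≤ q)
    (h1 : x ⊓ p = 0) (h2 : x ⊓ q = 0) : x ⊓ (p ⊔ q) = 0 := by
  refine le_antisymm ?_ (le_inf hx (hp.trans le_sup_left))
  calc x ⊓ (p ⊔ q) ≤ x ⊓ (p + q) :=
        inf_le_inf_left x (sup_le (le_add_of_nonneg_right hq) (le_add_of_nonneg_left hp))
    _ = (p + q) ⊓ x := inf_comm _ _
    _ ≤ p ⊓ x + q ⊓ x := aux_inf_add_le p q x hp hq hx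
    _ = 0 := by rw [inf_comm p x, inf_comm q x, h1, h2, add_zero]

lemma aux_inf_zero_of_le (x y z : G) (hx : 0 ≤ x) (hy : 0 ≤ y) (hyz : y ≤ z)
    (h : x ⊓ z = 0) : x ⊓ y = 0 :=
  le_antisymm (h ▸ inf_le_inf_left x hyz) (le_inf hx hy)

lemma aux_wu_mono (v w : G) (h : IsWeakUnit v) (hvw : v ≤ w) : IsWeakUnit w :=
  ⟨h.1.trans hvw, fun x hx =>
    h.2 x (aux_inf_zero_of_le |x| v w (abs_nonneg x) h.1 hvw hx)⟩

lemma aux_compl_sup (a b a' b' : G) (ha : 0 ≤ a) (hb : 0 ≤ b) (ha' : 0 ≤ a') (hb' : 0 ≤ b')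
    (haa' : a ⊓ a' = 0) (hwa : IsWeakUnit (a ⊔ a')) (hbb' : b ⊓ b' = 0)
    (hwb : IsWeakUnit (b ⊔ b')) :
    (a ⊔ b) ⊓ (a' ⊓ b') = 0 ∧ IsWeakUnit ((a ⊔ b) ⊔ (a' ⊓ b')) := by
  have hab0 : 0 ≤ a' ⊓ b' := le_inf ha' hb'
  constructor
  · refine le_antisymm ?_ (le_inf (ha.trans le_sup_left) hab0)
    calc (a ⊔ b) ⊓ (a' ⊓ b') ≤ (a + b) ⊓ (a' ⊓ b') :=
          inf_le_inf_right _ (sup_le (le_add_of_nonneg_right hb) (le_add_of_nonneg_left ha))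
      _ ≤ a ⊓ (a' ⊓ b') + b ⊓ (a' ⊓ b') := aux_inf_add_le a b _ ha hb hab0
      _ ≤ a ⊓ a' + b ⊓ b' := add_le_add (inf_le_inf_left a inf_le_left)
          (inf_le_inf_left b inf_le_right)
      _ = 0 := by rw [haa', hbb', add_zero]
  · refine ⟨le_trans ha (le_sup_left.trans le_sup_left), fun x hx => ?_⟩
    have hx0 := abs_nonneg x
    have hxa : |x| ⊓ a = 0 :=
      aux_inf_zero_of_le _ _ _ hx0 ha (le_sup_left.trans le_sup_left) hx
    have hxb : |x| ⊓ b = 0 :=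
      aux_inf_zero_of_le _ _ _ hx0 hb (le_sup_right.trans le_sup_left) hx
    have hxab : |x| ⊓ (a' ⊓ b') = 0 :=
      aux_inf_zero_of_le _ _ _ hx0 hab0 le_sup_right hx
    set y := |x| ⊓ a' with hy
    have hy0 : 0 ≤ y := le_inf hx0 ha'
    have hyb' : y ⊓ b' = 0 := by rw [hy, inf_assoc]; exact hxab
    have hyb : y ⊓ b = 0 :=
      le_antisymm (hxb ▸ inf_le_inf_right b inf_le_left) (le_inf hy0 hb)
    have hy' : y ⊓ (b ⊔ b') = 0 := aux_disj_sup y b b' hy0 hb hb' hyb hyb'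
    have hyz : y = 0 := hwb.2 y (by rwa [abs_of_nonneg hy0])
    have hxa' : |x| ⊓ a' = 0 := hyz
    exact hwa.2 x (aux_disj_sup |x| a a' hx0 ha ha' hxa hxa')

lemma aux_key (N : Set G) (hN : IsMaxC N) (a b : G) (ha : 0 ≤ a) (hb : 0 ≤ b)
    (hab : a ⊓ b = 0) (hwab : IsWeakUnit (a ⊔ b)) (hbN : b ∉ N) :
    ∃ c ∈ N, 0 ≤ c ∧ ∀ x : G, |x| ⊓ c = 0 → |x| ⊓ a = 0 := by
  obtain ⟨⟨⟨hN0, hNadd, hNneg, hNsup, hNinf, hNcvx⟩, hNc⟩, hNprop, hNmax⟩ := hN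
  set H : Set G := {g | ∃ n ∈ N, 0 ≤ n ∧ ∃ k : ℕ, |g| ≤ n + k • b} with hHdef
  have hNH : N ⊆ H := by
    intro n hn
    refine ⟨n ⊔ -n, hNsup n hn _ (hNneg n hn), (abs_nonneg n).trans (abs_le'.mpr ⟨le_sup_left, le_sup_right⟩), 0, ?_⟩
    simpa [zero_nsmul] using abs_le'.mpr ⟨le_sup_left, le_sup_right⟩
  have hbH : b ∈ H := ⟨0, hN0, le_rfl, 1, by simp [abs_of_nonneg hb]⟩
  have habs2 : ∀ g ∈ H, ∀ g' ∈ H, ∀ h : G, |h| ≤ |g| + |g'| → h ∈ H := by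
    rintro g ⟨n, hn, hn0, k, hg⟩ g' ⟨n', hn', hn0', k', hg'⟩ h hh
    refine ⟨n + n', hNadd n hn n' hn', add_nonneg hn0 hn0', k + k', ?_⟩
    calc |h| ≤ |g| + |g'| := hh
      _ ≤ (n + k • b) + (n' + k' • b) := add_le_add hg hg'
      _ = (n + n') + (k + k') • b := by rw [add_nsmul]; abel
  have hH : IsConvexLSubgroup H := by
    refine ⟨⟨0, hN0, le_rfl, 0, by simp [zero_nsmul]⟩, ?_, ?_, ?_, ?_, ?_⟩
    · intro g hg g' hg'
      exact habs2 g hg g' hg' _ (abs_add_le g g')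
    · rintro g ⟨n, hn, hn0, k, hg⟩
      exact ⟨n, hn, hn0, k, by rwa [abs_neg]⟩
    · intro g hg g' hg'
      refine habs2 g hg g' hg' _ (abs_le'.mpr ⟨?_, ?_⟩)
      · exact sup_le ((le_abs_self g).trans (le_add_of_nonneg_right (abs_nonneg g')))
          ((le_abs_self g').trans (le_add_of_nonneg_left (abs_nonneg g)))
      · rw [neg_sup]
        exact inf_le_left.trans ((neg_le_abs g).trans
          (le_add_of_nonneg_right (abs_nonneg g')))
    · intro g hg g' hg'
      refine habs2 g hg g' hg' _ (abs_le'.mpr ⟨?_, ?_⟩)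
      · exact inf_le_left.trans ((le_abs_self g).trans
          (le_add_of_nonneg_right (abs_nonneg g')))
      · rw [neg_inf]
        exact sup_le ((neg_le_abs g).trans (le_add_of_nonneg_right (abs_nonneg g')))
          ((neg_le_abs g').trans (le_add_of_nonneg_left (abs_nonneg g)))
    · rintro x y hx0 hxy ⟨n, hn, hn0, k, hy⟩
      exact ⟨n, hn, hn0, k, by
        rw [abs_of_nonneg hx0]
        exact hxy.trans ((le_abs_self y).trans hy)⟩
  have hba : b ⊓ a = 0 := (inf_comm b a).trans hab
  have hCs : IsCSubgroup H := by
    refine ⟨hH, ?_⟩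
    rintro h ⟨n, hn, hn0, k, hhn⟩
    obtain ⟨c, hcN, hc_compl, hnc⟩ := hNc n hn
    obtain ⟨hc0, d, hd0, hcd, hcdw⟩ := hc_compl
    have hnc' : n ≤ c := (le_abs_self n).trans hnc
    cases k with
    | zero =>
      rw [zero_nsmul, add_zero] at hhn
      exact ⟨c, hNH hcN, ⟨hc0, d, hd0, hcd, hcdw⟩, hhn.trans hnc'⟩
    | succ m =>
      have hkb0 : 0 ≤ (m + 1) • b := nsmul_nonneg hb _
      have hkba : ((m + 1) • b) ⊓ a = 0 := aux_smul_inf b a hb ha hba _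
      have hbkb : b ≤ (m + 1) • b := by
        rw [succ_nsmul]
        exact le_add_of_nonneg_left (nsmul_nonneg hb m)
      have hkbw : IsWeakUnit (((m + 1) • b) ⊔ a) :=
        aux_wu_mono _ _ ((sup_comm a b) ▸ hwab) (sup_le_sup_right hbkb a)
      obtain ⟨hdisj, hwu⟩ := aux_compl_sup c ((m + 1) • b) d a hc0 hkb0 hd0 ha hcd hcdw hkba hkbw
      set s := c ⊔ (m + 1) • b with hs
      have hs0 : 0 ≤ s := hc0.trans le_sup_left
      set E := s + s with hE
      have hE0 : 0 ≤ E := add_nonneg hs0 hs0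
      have hEdisj : E ⊓ (d ⊓ a) = 0 := by
        refine le_antisymm ?_ (le_inf hE0 (le_inf hd0 ha))
        calc E ⊓ (d ⊓ a) ≤ s ⊓ (d ⊓ a) + s ⊓ (d ⊓ a) :=
              aux_inf_add_le s s _ hs0 hs0 (le_inf hd0 ha)
          _ = 0 := by rw [hdisj, add_zero]
      have hEw : IsWeakUnit (E ⊔ (d ⊓ a)) :=
        aux_wu_mono _ _ hwu (sup_le_sup_right (le_add_of_nonneg_left hs0) _)
      have hskb : s ≤ c + (m + 1) • b :=
        sup_le (le_add_of_nonneg_right hkb0) (le_add_of_nonneg_left hc0)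
      have hEH : E ∈ H := by
        refine ⟨c + c, hNadd c hcN c hcN, add_nonneg hc0 hc0, (m + 1) + (m + 1), ?_⟩
        rw [abs_of_nonneg hE0, add_nsmul]
        calc E ≤ (c + (m + 1) • b) + (c + (m + 1) • b) := add_le_add hskb hskb
          _ = c + c + ((m + 1) • b + (m + 1) • b) := by abel
      refine ⟨E, hEH, ⟨hE0, d ⊓ a, le_inf hd0 ha, hEdisj, hEw⟩, ?_⟩
      calc |h| ≤ n + (m + 1) • b := hhn
        _ ≤ c + (m + 1) • b := add_le_add hnc' le_rfl
        _ ≤ s + s := add_le_add le_sup_left le_sup_right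
  have hwH : ∃ w ∈ H, IsWeakUnit w := by
    by_contra hcon
    push_neg at hcon
    have := hNmax H hCs (fun w hw hwu => hcon w hw hwu) hNH
    exact hbN (this ▸ hbH)
  obtain ⟨w, ⟨n, hn, hn0, k, hwn⟩, hw⟩ := hwH
  have hw0 : 0 ≤ w := hw.1
  have hkb0 : 0 ≤ k • b := nsmul_nonneg hb k
  set c := w ⊓ a with hc
  have hc0 : 0 ≤ c := le_inf hw0 ha
  have hcn : c ≤ n := by
    calc c ≤ (n + k • b) ⊓ a :=
          inf_le_inf_right a ((le_abs_self w).trans hwn)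
      _ ≤ n ⊓ a + (k • b) ⊓ a := aux_inf_add_le n (k • b) a hn0 hkb0 ha
      _ = n ⊓ a := by rw [aux_smul_inf b a hb ha hba k, add_zero]
      _ ≤ n := inf_le_left
  refine ⟨c, hNcvx c n hc0 hcn hn, hc0, fun x hx => ?_⟩
  have hy0 : 0 ≤ |x| ⊓ a := le_inf (abs_nonneg x) ha
  have : (|x| ⊓ a) ⊓ w = 0 := by
    rw [inf_assoc, inf_comm a w, ← hc]
    exact hx
  have := hw.2 (|x| ⊓ a) (by rwa [abs_of_nonneg hy0])
  exact this

/-- a maximal proper c-subgroup contains exactly one member of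
each complementary pair. -/
theorem maxC_xor_complementary_pair (u : G) (hu : IsWeakUnit u)
    (N : Set G) (hN : IsMaxC N) (e f : G) (he : 0 ≤ e) (hf : 0 ≤ f)
    (hef : e ⊓ f = 0) (hw : IsWeakUnit (e ⊔ f)) :
    Xor' (e ∈ N) (f ∈ N) := by
  by_cases heN : e ∈ N
  · refine Or.inl ⟨heN, fun hfN => ?_⟩
    exact hN.2.1 (e ⊔ f) (hN.1.1.2.2.2.1 e heN f hfN) hw
  · refine Or.inr ⟨?_, heN⟩
    by_contra hfN
    obtain ⟨c, hcN, hc0, hc⟩ := aux_key N hN e f he hf hef hw hfN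
    obtain ⟨c', hc'N, hc'0, hc'⟩ :=
      aux_key N hN f e hf he ((inf_comm f e).trans hef) (by rwa [sup_comm] at hw) heN
    refine hN.2.1 (c ⊔ c') (hN.1.1.2.2.2.1 c hcN c' hc'N) ⟨hc0.trans le_sup_left, fun x hx => ?_⟩
    have hx0 := abs_nonneg x
    have hxc : |x| ⊓ c = 0 := aux_inf_zero_of_le _ _ _ hx0 hc0 le_sup_left hx
    have hxc' : |x| ⊓ c' = 0 := aux_inf_zero_of_le _ _ _ hx0 hc'0 le_sup_right hx
    exact hw.2 x (aux_disj_sup |x| e f hx0 he hf (hc x hxc) (hc' x hxc'))
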